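/- For any factorization system (L,R) on a finite lattice P, the cocharacteristic function λ^{(L,R)} is a closure operator: it is monotone, extensive (x ≤ λ(x)), and idempotent (λ(λ(x)) = λ(x)). -/
import Mathlib


/-- A (weak = orthogonal) factorization system on a poset `P`, viewed as a thin category:
a pair of classes of relations `(L, R)` refining `≤` such that every relation factors as a
left relation followed by a right relation, and `L = ᗮR`, `R = Lᗮ` with respect to the
lifting property. -/
structure FacSys (P : Type*) [PartialOrder P] where
  L : P → P → Prop
  R : P → P → Prop
  L_le : ∀ {x y}, L x y → x ≤ y
  R_le : ∀ {x y}, R x y → x ≤ y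
  fact : ∀ {x y}, x ≤ y → ∃ z, L x z ∧ R z y
  L_iff : ∀ x y, L x y ↔ x ≤ y ∧ ∀ a b, R a b → x ≤ a → y ≤ b → y ≤ a
  R_iff : ∀ x y, R x y ↔ x ≤ y ∧ ∀ a b, L a b → a ≤ x → b ≤ y → b ≤ x

/-- The cocharacteristic function of any factorization system on a finite bounded lattice
is a closure operator: monotone, extensive, and idempotent. -/
theorem stmt5 {P : Type*} [Lattice P] [BoundedOrder P] [Finite P] (F : FacSys P)
    (lam : P → P) (hlam : ∀ x, F.L x (lam x) ∧ F.R (lam x) ⊤) :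
    Monotone lam ∧ (∀ x, x ≤ lam x) ∧ (∀ x, lam (lam x) = lam x) := by
  have ext : ∀ x, x ≤ lam x := fun x => F.L_le (hlam x).1
  refine ⟨?_, ext, ?_⟩
  · intro x y hxy
    have h := (F.L_iff x (lam x)).1 (hlam x).1
    exact h.2 (lam y) ⊤ (hlam y).2 (hxy.trans (ext y)) le_top
  · intro x
    have h := (F.L_iff (lam x) (lam (lam x))).1 (hlam (lam x)).1
    exact le_antisymm (h.2 (lam x) ⊤ (hlam x).2 le_rfl le_top) (ext _)
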